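/- arXiv:math/0607660 — 3 statements merged into one kernel-verified Lean document; each statement's English description precedes it below -/
import Mathlib

section
/- Let R be a commutative Noetherian ring of prime characteristic p whose Frobenius endomorphism is finite and flat, and let a be an ideal of R. If r, r' are nonnegative integers and e, e' are nonnegative integers such that r/p^e ≥ r'/p^{e'} and e' ≥ e, then (a^r)^{[1/p^e]} ⊆ (a^{r'})^{[1/p^{e'}]}. -/
open Ideal

/-- The `q`-th bracket power `J^{[q]}` of an ideal: the ideal generated by
the `q`-th powers of the elements of `J`. -/
def bracketPow {R : Type*} [CommRing R] (J : Ideal R) (q : ℕ) : Ideal R :=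
  Ideal.span ((fun x => x ^ q) '' (J : Set R))

/-- The ideal `b^{[1/q]}`: the smallest ideal `J` with `b ⊆ J^{[q]}`
(realized as the intersection of all such ideals). -/
def frobRoot {R : Type*} [CommRing R] (b : Ideal R) (q : ℕ) : Ideal R :=
  sInf {J : Ideal R | b ≤ bracketPow J q}

/-- The generalized test ideal `τ(a^c) = ⋃_{e ≥ 1} (a^{⌈c p^e⌉})^{[1/p^e]}`. -/
noncomputable def testIdeal {R : Type*} [CommRing R] (p : ℕ) (a : Ideal R) (c : ℝ) : Ideal R :=
  ⨆ e : ℕ, frobRoot (a ^ ⌈c * (p : ℝ) ^ (e + 1)⌉₊) (p ^ (e + 1))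

/-- `ν_a^J(q)`: the largest nonnegative integer `r` with `a^r ⊄ J^{[q]}`
(and `0` if there is no such `r`). -/
noncomputable def nuF {R : Type*} [CommRing R] (a J : Ideal R) (q : ℕ) : ℕ :=
  sSup {r : ℕ | ¬ a ^ r ≤ bracketPow J q}

/-- The F-threshold `c^J(a) = sup_{e ≥ 1} ν_a^J(p^e)/p^e`. -/
noncomputable def FThreshold {R : Type*} [CommRing R] (p : ℕ) (a J : Ideal R) : ℝ :=
  ⨆ e : ℕ, (nuF a J (p ^ (e + 1)) : ℝ) / (p : ℝ) ^ (e + 1)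

/-- `α > 0` is an F-jumping exponent of `a` if `τ(a^α) ≠ τ(a^c)` for all `0 ≤ c < α`. -/
def IsFJumpingExponent {R : Type*} [CommRing R] (p : ℕ) (a : Ideal R) (α : ℝ) : Prop :=
  0 < α ∧ ∀ c : ℝ, 0 ≤ c → c < α → testIdeal p a c ≠ testIdeal p a α

universe u

/-- Ideal quotient (colon) commutes with flat base change: the nontrivial inclusion,
proved via the equational criterion for flatness. -/
theorem flat_colon_aux {R S : Type u} [CommRing R] [CommRing S] [Algebra R S]
    [Module.Flat R S] (K : Ideal R) (x : R) :
    (K.map (algebraMap R S)).colon (Ideal.span {algebraMap R S x}) ≤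
      (K.colon (Ideal.span {x})).map (algebraMap R S) := by
  intro s hs
  rw [Ideal.mem_colon_span_singleton] at hs
  rw [Ideal.map, Ideal.span] at hs
  rw [Submodule.mem_span_set'] at hs
  obtain ⟨n, c, g, hsum⟩ := hs
  choose k hkK hkg using fun i => (g i).2
  set ι := ULift.{u} (Fin (n + 1)) with hι
  set av : ι → R := fun i => Fin.cases x k i.down with hav
  set yv : ι → S := fun i => Fin.cases s (fun j => -(c j)) i.down with hyv
  have hrel : ∑ i : ι, av i • yv i = 0 := by
    have h1 : ∑ i : ι, av i • yv i
        = ∑ i : Fin (n + 1), av (ULift.up i) • yv (ULift.up i) :=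
      (Equiv.ulift.symm.sum_comp fun i => av i • yv i).symm
    rw [h1, Fin.sum_univ_succ]
    simp only [hav, hyv, Fin.cases_zero, Fin.cases_succ, Algebra.smul_def]
    have h2 : ∀ j : Fin n, algebraMap R S (k j) * (-(c j)) = -(c j * (g j : S)) := by
      intro j; rw [hkg j]; ring
    rw [Finset.sum_congr rfl fun j _ => h2 j]
    have h3 : ∑ j : Fin n, c j * (g j : S) = s * algebraMap R S x := by
      simpa [smul_eq_mul] using hsum
    rw [Finset.sum_neg_distrib, h3]
    ring
  obtain ⟨κ, A, w, hy, ha⟩ :=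
    Module.Flat.isTrivialRelation_of_sum_smul_eq_zero (f := av) (x := yv) (by exact hrel)
  have hs0 : s = ∑ j, A (ULift.up 0) j • w j := by
    simpa [hyv, hav] using hy (ULift.up (0 : Fin (n + 1)))
  rw [hs0]
  refine Submodule.sum_mem _ fun j _ => ?_
  rw [Algebra.smul_def]
  refine Ideal.mul_mem_right _ _ (Ideal.mem_map_of_mem _ ?_)
  rw [Ideal.mem_colon_span_singleton]
  have haj := ha j
  have h1 : ∑ i : ι, av i * A i j
      = ∑ i : Fin (n + 1), av (ULift.up i) * A (ULift.up i) j :=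
    (Equiv.ulift.symm.sum_comp fun i => av i * A i j).symm
  rw [h1, Fin.sum_univ_succ] at haj
  simp only [hav, Fin.cases_zero, Fin.cases_succ] at haj
  have hx : x * A (ULift.up 0) j = -∑ i : Fin n, k i * A (ULift.up i.succ) j :=
    eq_neg_of_add_eq_zero_left haj
  rw [mul_comm]
  rw [hx]
  exact neg_mem (Ideal.sum_mem _ fun i _ => Ideal.mul_mem_right _ _ (hkK i))

/-- If `f` is flat and `map f` reflects the unit ideal, then `map f` reflects inclusions. -/
theorem map_le_map_reflect {R : Type u} [CommRing R] (f : R →+* R) (hf : f.Flat)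
    (htop : ∀ J : Ideal R, J.map f = ⊤ → J = ⊤)
    {I K : Ideal R} (h : I.map f ≤ K.map f) : I ≤ K := by
  intro x hx
  have hfx : f x ∈ K.map f := h (Ideal.mem_map_of_mem f hx)
  have key := @flat_colon_aux R R _ _ f.toAlgebra hf K x
  rw [RingHom.algebraMap_toAlgebra] at key
  have h1 : (1 : R) ∈ (K.map f).colon (Ideal.span {f x}) := by
    rw [Ideal.mem_colon_span_singleton, one_mul]; exact hfx
  have h3 : (K.colon (Ideal.span {x})).map f = ⊤ :=
    (Ideal.eq_top_iff_one _).mpr (key h1)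
  have h4 : K.colon (Ideal.span {x}) = ⊤ := htop _ h3
  have h5 : (1 : R) ∈ K.colon (Ideal.span {x}) := h4 ▸ Submodule.mem_top
  rw [Ideal.mem_colon_span_singleton, one_mul] at h5
  exact h5

/-- The iterated Frobenius of a flat Frobenius is flat. -/
theorem iterateFrobenius_flat {R : Type u} [CommRing R] (p : ℕ) [Fact p.Prime] [CharP R p]
    (hflat : (frobenius R p).Flat) (e : ℕ) : (iterateFrobenius R p e).Flat := by
  induction e with
  | zero => rw [iterateFrobenius_zero, ← RingHom.one_def]; exact RingHom.Flat.id R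
  | succ e ih =>
      have : iterateFrobenius R p (e + 1) = (frobenius R p).comp (iterateFrobenius R p e) := by
        rw [add_comm, iterateFrobenius_add, iterateFrobenius_one]
      rw [this]
      haveI := hflat; haveI := ih
      exact ih.comp hflat

/-- The extension of an ideal along the iterated Frobenius reflects the unit ideal. -/
theorem map_iterateFrobenius_eq_top {R : Type u} [CommRing R] (p : ℕ) [Fact p.Prime] [CharP R p]
    (e : ℕ) (J : Ideal R) (h : J.map (iterateFrobenius R p e) = ⊤) : J = ⊤ := by
  by_contra hne
  obtain ⟨m, hm, hle⟩ := Ideal.exists_le_maximal J hne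
  have hmap : J.map (iterateFrobenius R p e) ≤ m := by
    rw [Ideal.map_le_iff_le_comap]
    intro y hy
    show iterateFrobenius R p e y ∈ m
    rw [iterateFrobenius_def]
    exact Ideal.pow_mem_of_mem m (hle hy) _ (pow_pos (Fact.out (p := p.Prime)).pos e)
  rw [h] at hmap
  exact hm.ne_top (top_le_iff.mp hmap)

/-- The bracket power `J^{[p^e]}` is the extension of `J` along the iterated Frobenius. -/
theorem bracketPow_eq_map {R : Type u} [CommRing R] (p : ℕ) [Fact p.Prime] [CharP R p]
    (J : Ideal R) (e : ℕ) : bracketPow J (p ^ e) = J.map (iterateFrobenius R p e) := rfl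

/-- monotonicity `(a^r)^{[1/p^e]} ⊆ (a^{r'})^{[1/p^{e'}]}`
when `r/p^e ≥ r'/p^{e'}` and `e' ≥ e`. -/
theorem stmt3_frobRoot_pow_mono
    {R : Type*} [CommRing R] [IsNoetherianRing R] (p : ℕ) [Fact p.Prime] [CharP R p]
    (hfin : (frobenius R p).Finite) (hflat : (frobenius R p).Flat)
    (a : Ideal R) (r r' e e' : ℕ)
    (h1 : (r' : ℝ) / (p : ℝ) ^ e' ≤ (r : ℝ) / (p : ℝ) ^ e) (h2 : e ≤ e') :
    frobRoot (a ^ r) (p ^ e) ≤ frobRoot (a ^ r') (p ^ e') := by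
  have hp : 0 < p := (Fact.out (p := p.Prime)).pos
  set d := e' - e with hd
  have he' : e' = d + e := by omega
  -- r' ≤ r * p ^ d
  have hrr : r' ≤ r * p ^ d := by
    have hpR : (0 : ℝ) < (p : ℝ) := by exact_mod_cast hp
    have h3 : (r' : ℝ) * (p : ℝ) ^ e ≤ (r : ℝ) * (p : ℝ) ^ e' :=
      (div_le_div_iff₀ (pow_pos hpR e') (pow_pos hpR e)).mp h1
    have h4 : (r' : ℝ) * (p : ℝ) ^ e ≤ ((r : ℝ) * (p : ℝ) ^ d) * (p : ℝ) ^ e := by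
      calc (r' : ℝ) * (p : ℝ) ^ e ≤ (r : ℝ) * (p : ℝ) ^ e' := h3
        _ = ((r : ℝ) * (p : ℝ) ^ d) * (p : ℝ) ^ e := by rw [he', pow_add]; ring
    have h5 : r' * p ^ e ≤ (r * p ^ d) * p ^ e := by exact_mod_cast h4
    exact Nat.le_of_mul_le_mul_right h5 (pow_pos hp e)
  refine le_sInf fun J hJ => sInf_le ?_
  show a ^ r ≤ bracketPow J (p ^ e)
  have hJ' : a ^ r' ≤ bracketPow J (p ^ e') := hJ
  rw [bracketPow_eq_map] at hJ'
  rw [bracketPow_eq_map]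
  have key : (a ^ r).map (iterateFrobenius R p d) ≤
      (J.map (iterateFrobenius R p e)).map (iterateFrobenius R p d) := by
    have step1 : (a ^ r).map (iterateFrobenius R p d) ≤ a ^ (r * p ^ d) := by
      rw [Ideal.map_le_iff_le_comap]
      intro y hy
      show iterateFrobenius R p d y ∈ a ^ (r * p ^ d)
      rw [iterateFrobenius_def, pow_mul]
      exact Ideal.pow_mem_pow hy _
    have step2 : a ^ (r * p ^ d) ≤ a ^ r' := Ideal.pow_le_pow_right hrr
    have step3 : (J.map (iterateFrobenius R p e)).map (iterateFrobenius R p d)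
        = J.map (iterateFrobenius R p e') := by
      rw [Ideal.map_map, ← iterateFrobenius_add, ← he']
    rw [step3]
    exact le_trans step1 (le_trans step2 hJ')
  exact map_le_map_reflect _ (iterateFrobenius_flat p hflat d)
    (map_iterateFrobenius_eq_top p d) key
end

section
/- Let R be a commutative Noetherian ring of prime characteristic p whose Frobenius endomorphism is finite and flat, let a be an ideal of R, and let c ≥ 0 be a real number. Then for every e ≥ 1 one has (a^{⌈c p^e⌉})^{[1/p^e]} ⊆ (a^{⌈c p^{e+1}⌉})^{[1/p^{e+1}]}, and this increasing chain of ideals stabilizes: there exists e_0 ≥ 1 such that for all e ≥ e_0 the ideal (a^{⌈c p^e⌉})^{[1/p^e]} equals the generalized test ideal τ(a^c) = ⋃_{e≥1} (a^{⌈c p^e⌉})^{[1/p^e]}. -/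
open Ideal

/-- For a faithfully flat algebra, extension of ideals reflects containment. -/
theorem ffExtract {R S : Type*} [CommRing R] [CommRing S] [Algebra R S]
    [Module.FaithfullyFlat R S] {I K : Ideal R}
    (h : Ideal.map (algebraMap R S) I ≤ Ideal.map (algebraMap R S) K) : I ≤ K := by
  have hsm : I • (⊤ : Submodule R S) ≤ K • (⊤ : Submodule R S) := by
    rw [Ideal.smul_top_eq_map, Ideal.smul_top_eq_map]
    exact fun x hx => h hx
  intro x hx
  have key : (K.mkQ ∘ₗ LinearMap.toSpanSingleton R R x) = 0 := by
    rw [Module.FaithfullyFlat.zero_iff_rTensor_zero R S]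
    apply TensorProduct.ext'
    intro r s
    have hmem : (r * x) • s ∈ K • (⊤ : Submodule R S) := by
      rw [mul_smul]
      exact Submodule.smul_mem _ _ (hsm (Submodule.smul_mem_smul hx Submodule.mem_top))
    apply (TensorProduct.quotTensorEquivQuotSMul S K).injective
    simp only [LinearMap.rTensor_tmul, LinearMap.coe_comp, Function.comp_apply,
      LinearMap.toSpanSingleton_apply, Submodule.mkQ_apply, LinearMap.zero_apply, map_zero,
      Ideal.Quotient.mk_eq_mk, TensorProduct.quotTensorEquivQuotSMul_mk_tmul]
    rw [Submodule.Quotient.mk_eq_zero]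
    simpa using hmem
  have := LinearMap.congr_fun key 1
  simp only [LinearMap.coe_comp, Function.comp_apply, LinearMap.toSpanSingleton_apply,
    one_smul, Submodule.mkQ_apply, LinearMap.zero_apply] at this
  exact (Submodule.Quotient.mk_eq_zero _).mp this

/-- A flat ring map whose extensions of maximal ideals are proper reflects
containment of ideals under extension. -/
theorem extract_of_flat {R S : Type*} [CommRing R] [CommRing S] (f : R →+* S)
    (hf : f.Flat) (hb : ∀ m : Ideal R, m.IsMaximal → Ideal.map f m ≠ ⊤)
    {I K : Ideal R} (h : Ideal.map f I ≤ Ideal.map f K) : I ≤ K := by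
  letI : Algebra R S := f.toAlgebra
  haveI hFlat : Module.Flat R S := hf
  haveI : Module.FaithfullyFlat R S := by
    refine { toFlat := hFlat, submodule_ne_top := ?_ }
    intro m hm hsm
    apply hb m hm
    rw [Ideal.smul_top_eq_map] at hsm
    rw [Ideal.eq_top_iff_one, ← RingHom.algebraMap_toAlgebra f]
    have : (1 : S) ∈ (Ideal.map (algebraMap R S) m).restrictScalars R := hsm ▸ trivial
    simpa using this
  exact ffExtract (S := S) (by rwa [RingHom.algebraMap_toAlgebra])

theorem map_frobenius_eq {R : Type*} [CommRing R] (p : ℕ) [Fact p.Prime] [CharP R p]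
    (J : Ideal R) : Ideal.map (frobenius R p) J = bracketPow J p := by
  rw [Ideal.map, bracketPow]
  congr 1

/-- Frobenius extraction: if `I^{[p]} ⊆ K^{[p]}` and Frobenius is flat, then `I ⊆ K`. -/
theorem frob_bracket_extract {R : Type*} [CommRing R] (p : ℕ) [Fact p.Prime] [CharP R p]
    (hflat : (frobenius R p).Flat) {I K : Ideal R}
    (h : bracketPow I p ≤ bracketPow K p) : I ≤ K := by
  refine extract_of_flat (frobenius R p) hflat (fun m hm => ?_) ?_
  · have hle : Ideal.map (frobenius R p) m ≤ m := by
      rw [Ideal.map_le_iff_le_comap]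
      intro x hxm
      exact Ideal.mem_comap.mpr (by
        simpa [frobenius_def] using m.pow_mem_of_mem hxm p (Fact.out : p.Prime).pos)
    exact fun htop => hm.ne_top (eq_top_iff.mpr (htop ▸ hle))
  · rw [map_frobenius_eq, map_frobenius_eq]; exact h

theorem bracketPow_le_pow {R : Type*} [CommRing R] (J : Ideal R) (q : ℕ) :
    bracketPow J q ≤ J ^ q := by
  rw [bracketPow, Ideal.span_le]
  rintro _ ⟨x, hx, rfl⟩
  exact Ideal.pow_mem_pow hx q

theorem bracketPow_mul_le {R : Type*} [CommRing R] (J : Ideal R) (q r : ℕ) :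
    bracketPow J (q * r) ≤ bracketPow (bracketPow J q) r := by
  rw [bracketPow, Ideal.span_le]
  rintro _ ⟨x, hx, rfl⟩
  show x ^ (q * r) ∈ (bracketPow (bracketPow J q) r : Set R)
  rw [pow_mul]
  exact Ideal.subset_span ⟨x ^ q, Ideal.subset_span ⟨x, hx, rfl⟩, rfl⟩

theorem bracketPow_mono {R : Type*} [CommRing R] {I J : Ideal R} (h : I ≤ J) (q : ℕ) :
    bracketPow I q ≤ bracketPow J q :=
  Ideal.span_mono (Set.image_mono h)

/-- the single-step monotonicity of the chain. -/
theorem frobRoot_step {R : Type*} [CommRing R] (p : ℕ) [Fact p.Prime] [CharP R p]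
    (hflat : (frobenius R p).Flat) (a : Ideal R) (c : ℝ) (hc : 0 ≤ c) (e : ℕ) :
    frobRoot (a ^ ⌈c * (p : ℝ) ^ e⌉₊) (p ^ e) ≤
      frobRoot (a ^ ⌈c * (p : ℝ) ^ (e + 1)⌉₊) (p ^ (e + 1)) := by
  apply sInf_le_sInf
  intro J hJ
  simp only [Set.mem_setOf_eq] at hJ ⊢
  have hceil : (⌈c * (p : ℝ) ^ (e + 1)⌉₊ : ℕ) ≤ ⌈c * (p : ℝ) ^ e⌉₊ * p := by
    rw [Nat.ceil_le]
    push_cast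
    calc c * (p : ℝ) ^ (e + 1) = (c * (p : ℝ) ^ e) * p := by ring
      _ ≤ (⌈c * (p : ℝ) ^ e⌉₊ : ℝ) * p :=
        mul_le_mul_of_nonneg_right (Nat.le_ceil _) (by positivity)
  refine frob_bracket_extract p hflat ?_
  calc bracketPow (a ^ ⌈c * (p : ℝ) ^ e⌉₊) p
      ≤ (a ^ ⌈c * (p : ℝ) ^ e⌉₊) ^ p := bracketPow_le_pow _ _
    _ = a ^ (⌈c * (p : ℝ) ^ e⌉₊ * p) := (pow_mul _ _ _).symm
    _ ≤ a ^ ⌈c * (p : ℝ) ^ (e + 1)⌉₊ := Ideal.pow_le_pow_right hceil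
    _ ≤ bracketPow J (p ^ (e + 1)) := hJ
    _ = bracketPow J (p ^ e * p) := by rw [pow_succ]
    _ ≤ bracketPow (bracketPow J (p ^ e)) p := bracketPow_mul_le _ _ _

/-- the chain `(a^{⌈c p^e⌉})^{[1/p^e]}` is increasing and stabilizes
to the generalized test ideal `τ(a^c)`. -/
theorem stmt4_testIdeal_chain_stabilizes
    {R : Type*} [CommRing R] [IsNoetherianRing R] (p : ℕ) [Fact p.Prime] [CharP R p]
    (hfin : (frobenius R p).Finite) (hflat : (frobenius R p).Flat)
    (a : Ideal R) (c : ℝ) (hc : 0 ≤ c) :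
    (∀ e : ℕ, 1 ≤ e →
      frobRoot (a ^ ⌈c * (p : ℝ) ^ e⌉₊) (p ^ e) ≤
        frobRoot (a ^ ⌈c * (p : ℝ) ^ (e + 1)⌉₊) (p ^ (e + 1))) ∧
    ∃ e₀ : ℕ, 1 ≤ e₀ ∧ ∀ e : ℕ, e₀ ≤ e →
      frobRoot (a ^ ⌈c * (p : ℝ) ^ e⌉₊) (p ^ e) = testIdeal p a c := by
  constructor
  · exact fun e _ => frobRoot_step p hflat a c hc e
  · set f : ℕ →o Ideal R :=
      ⟨fun e => frobRoot (a ^ ⌈c * (p : ℝ) ^ (e + 1)⌉₊) (p ^ (e + 1)),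
        monotone_nat_of_le_succ fun e => frobRoot_step p hflat a c hc (e + 1)⟩ with hf
    obtain ⟨n, hn⟩ := monotone_stabilizes_iff_noetherian.mpr (inferInstance : IsNoetherian R R) f
    have htest : testIdeal p a c = f n := by
      refine le_antisymm (iSup_le fun e => ?_) (le_iSup (fun e => f e) n)
      rcases le_or_gt e n with h | h
      · exact f.monotone h
      · exact le_of_eq (hn e h.le).symm
    refine ⟨n + 1, Nat.le_add_left 1 n, fun e he => ?_⟩
    obtain ⟨k, rfl⟩ := Nat.exists_eq_add_of_le he
    have : frobRoot (a ^ ⌈c * (p : ℝ) ^ (n + 1 + k)⌉₊) (p ^ (n + 1 + k)) = f (n + k) := by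
      rw [hf]; norm_num [Nat.add_right_comm n 1 k]
    rw [this, ← hn (n + k) (Nat.le_add_right n k), htest]
end

section
/- Let R be a commutative Noetherian ring of prime characteristic p whose Frobenius endomorphism is finite and flat, and let a and b be ideals of R. Then for all real numbers c, c_1, c_2 ≥ 0: (1) if c_1 < c_2, then τ(a^{c_2}) ⊆ τ(a^{c_1}); (2) if a ⊆ b, then τ(a^c) ⊆ τ(b^c); (3) τ((a ∩ b)^c) ⊆ τ(a^c) ∩ τ(b^c) and τ(a^c) + τ(b^c) ⊆ τ((a + b)^c); (4) (subadditivity) τ((a·b)^c) ⊆ τ(a^c) · τ(b^c). -/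
open Ideal

/-! ### Auxiliary lemmas -/

/-- A finite flat module over a Noetherian ring is projective. -/
theorem TestIdealAux.projective_of_finite_of_flat {R M : Type*} [CommRing R] [IsNoetherianRing R]
    [AddCommGroup M] [Module R M] [Module.Finite R M] [Module.Flat R M] :
    Module.Projective R M := by
  haveI : Module.FinitePresentation R M := Module.finitePresentation_of_finite R M
  apply Module.projective_of_localization_maximal
  intro I hI
  haveI : IsNoetherianRing (Localization.AtPrime I) :=
    IsLocalization.isNoetherianRing I.primeCompl _ ‹_›
  haveI : Module.Free (Localization.AtPrime I) (LocalizedModule I.primeCompl M) :=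
    Module.free_of_flat_of_isLocalRing
  infer_instance

/-- Key lemma: for a finite flat ring map `f` out of a Noetherian ring, any ideal `b` of the
target is contained in the extension of the smallest ideal `J` with `b ≤ map f J`. -/
theorem TestIdealAux.le_map_sInf {R S : Type*} [CommRing R] [CommRing S] [IsNoetherianRing R]
    (f : R →+* S) (hfin : f.Finite) (hflat : f.Flat) (b : Ideal S) :
    b ≤ Ideal.map f (sInf {J : Ideal R | b ≤ Ideal.map f J}) := by
  letI := f.toAlgebra
  have halg : algebraMap R S = f := rfl
  haveI : Module.Finite R S := hfin
  haveI : Module.Flat R S := hflat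
  haveI : Module.Projective R S := TestIdealAux.projective_of_finite_of_flat
  obtain ⟨n, π, σ, hsurj, hinj, hπσ⟩ := Module.Finite.exists_comp_eq_id_of_projective R S
  set J₀ : Ideal R := Ideal.span {r | ∃ m ∈ b, ∃ i, σ m i = r} with hJ₀
  have key : ∀ m ∈ b, m ∈ Ideal.map f J₀ := by
    intro m hm
    have h1 : m = π (σ m) := by
      conv_lhs => rw [← LinearMap.id_apply (R := R) m, ← hπσ]
      rfl
    have h2 : σ m = ∑ i, (σ m i) • fun j => if i = j then (1:R) else 0 :=
      pi_eq_sum_univ (σ m)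
    rw [h1, h2, map_sum]
    apply Ideal.sum_mem
    intro i _
    rw [map_smul, Algebra.smul_def, halg]
    exact Ideal.mul_mem_right _ _ (Ideal.mem_map_of_mem f (Ideal.subset_span ⟨m, hm, i, rfl⟩))
  have hmin : ∀ J : Ideal R, b ≤ Ideal.map f J → J₀ ≤ J := by
    intro J hJ
    rw [hJ₀, Ideal.span_le]
    rintro r ⟨m, hm, i, rfl⟩
    have hmJ : m ∈ Ideal.map f J := hJ hm
    rw [Ideal.map, Ideal.span, Submodule.mem_span_set] at hmJ
    obtain ⟨c, hc, rfl⟩ := hmJ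
    rw [Finsupp.sum, map_sum, Finset.sum_apply]
    apply Ideal.sum_mem
    intro t ht
    obtain ⟨a, haJ, hfa⟩ := hc ht
    have : c t • t = a • c t := by
      rw [smul_eq_mul, Algebra.smul_def, halg, hfa, mul_comm]
    rw [this, map_smul, Pi.smul_apply, smul_eq_mul]
    exact Ideal.mul_mem_right _ _ haJ
  have h1 : J₀ ≤ sInf {J : Ideal R | b ≤ Ideal.map f J} :=
    le_sInf fun J hJ => hmin J hJ
  intro m hm
  exact Ideal.map_mono h1 (key m hm)

section Frob
variable {R : Type*} [CommRing R] (p : ℕ) [Fact p.Prime] [CharP R p]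

theorem TestIdealAux.bracketPow_eq_map (J : Ideal R) (n : ℕ) :
    bracketPow J (p ^ n) = Ideal.map (iterateFrobenius R p n) J := by
  have h : (fun x : R => x ^ p ^ n) = ⇑(iterateFrobenius R p n) := by
    funext x; rw [iterateFrobenius_def]
  rw [bracketPow, Ideal.map, h]

theorem TestIdealAux.iterateFrobenius_finite
    (hfin : (frobenius R p).Finite) (n : ℕ) : (iterateFrobenius R p n).Finite := by
  induction n with
  | zero => rw [iterateFrobenius_zero]; exact RingHom.Finite.id R
  | succ k ih =>
      rw [show k + 1 = 1 + k from by omega, iterateFrobenius_add, iterateFrobenius_one]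
      exact RingHom.Finite.comp hfin ih

theorem TestIdealAux.iterateFrobenius_flat
    (hflat : (frobenius R p).Flat) (n : ℕ) : (iterateFrobenius R p n).Flat := by
  haveI := hflat
  induction n with
  | zero =>
      rw [iterateFrobenius_zero]
      exact RingHom.Flat.id (R := R)
  | succ k ih =>
      haveI := ih
      rw [show k + 1 = 1 + k from by omega, iterateFrobenius_add, iterateFrobenius_one]
      exact RingHom.Flat.comp ih hflat

variable [IsNoetherianRing R]

/-- The fundamental property of `frobRoot`: `b ⊆ (b^{[1/q]})^{[q]}`. -/
theorem TestIdealAux.le_bracketPow_frobRoot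
    (hfin : (frobenius R p).Finite) (hflat : (frobenius R p).Flat) (b : Ideal R) (n : ℕ) :
    b ≤ bracketPow (frobRoot b (p ^ n)) (p ^ n) := by
  have h := TestIdealAux.le_map_sInf (iterateFrobenius R p n)
    (TestIdealAux.iterateFrobenius_finite p hfin n)
    (TestIdealAux.iterateFrobenius_flat p hflat n) b
  rw [frobRoot]
  have hset : {J : Ideal R | b ≤ bracketPow J (p ^ n)}
      = {J : Ideal R | b ≤ Ideal.map (iterateFrobenius R p n) J} := by
    ext J; rw [Set.mem_setOf_eq, Set.mem_setOf_eq, TestIdealAux.bracketPow_eq_map]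
  rw [hset, TestIdealAux.bracketPow_eq_map]
  exact h

end Frob

section Mono
variable {R : Type*} [CommRing R]

theorem TestIdealAux.frobRoot_mono {b c : Ideal R} (h : b ≤ c) (q : ℕ) :
    frobRoot b q ≤ frobRoot c q :=
  sInf_le_sInf fun J hJ => le_trans h hJ

theorem TestIdealAux.mul_bracketPow_le (A B : Ideal R) (q : ℕ) :
    bracketPow A q * bracketPow B q ≤ bracketPow (A * B) q := by
  rw [bracketPow, bracketPow, Ideal.span_mul_span]
  rw [Ideal.span_le]
  rintro x hx
  simp only [Set.mem_mul] at hx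
  obtain ⟨s, ⟨u, hu, rfl⟩, t, ⟨v, hv, rfl⟩, hx⟩ := hx
  subst hx
  apply Ideal.subset_span
  exact ⟨u * v, Ideal.mul_mem_mul hu hv, by simp [mul_pow]⟩

theorem TestIdealAux.testIdeal_mono_ideal (p : ℕ) {a b : Ideal R} (h : a ≤ b) (c : ℝ) :
    testIdeal p a c ≤ testIdeal p b c :=
  iSup_mono fun e => TestIdealAux.frobRoot_mono (Ideal.pow_right_mono h _) _

theorem TestIdealAux.testIdeal_anti (p : ℕ) (a : Ideal R) {c₁ c₂ : ℝ} (h : c₁ ≤ c₂) :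
    testIdeal p a c₂ ≤ testIdeal p a c₁ := by
  apply iSup_mono
  intro e
  apply TestIdealAux.frobRoot_mono
  apply Ideal.pow_le_pow_right
  exact Nat.ceil_le_ceil <| by
    apply mul_le_mul_of_nonneg_right h (by positivity)

end Mono

/-- basic properties of generalized test ideals. -/
theorem stmt5_testIdeal_basic_properties
    {R : Type*} [CommRing R] [IsNoetherianRing R] (p : ℕ) [Fact p.Prime] [CharP R p]
    (hfin : (frobenius R p).Finite) (hflat : (frobenius R p).Flat)
    (a b : Ideal R) :
    (∀ c₁ c₂ : ℝ, 0 ≤ c₁ → c₁ < c₂ → testIdeal p a c₂ ≤ testIdeal p a c₁) ∧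
    (∀ c : ℝ, 0 ≤ c → a ≤ b → testIdeal p a c ≤ testIdeal p b c) ∧
    (∀ c : ℝ, 0 ≤ c → testIdeal p (a ⊓ b) c ≤ testIdeal p a c ⊓ testIdeal p b c) ∧
    (∀ c : ℝ, 0 ≤ c → testIdeal p a c + testIdeal p b c ≤ testIdeal p (a + b) c) ∧
    (∀ c : ℝ, 0 ≤ c → testIdeal p (a * b) c ≤ testIdeal p a c * testIdeal p b c) := by
  refine ⟨?_, ?_, ?_, ?_, ?_⟩
  · intro c₁ c₂ _ h
    exact TestIdealAux.testIdeal_anti p a h.le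
  · intro c _ h
    exact TestIdealAux.testIdeal_mono_ideal p h c
  · intro c _
    exact le_inf (TestIdealAux.testIdeal_mono_ideal p inf_le_left c)
      (TestIdealAux.testIdeal_mono_ideal p inf_le_right c)
  · intro c _
    rw [Submodule.add_eq_sup]
    have hab : a + b = a ⊔ b := Submodule.add_eq_sup a b
    exact sup_le
      (TestIdealAux.testIdeal_mono_ideal p (hab ▸ (le_sup_left : a ≤ a ⊔ b)) c)
      (TestIdealAux.testIdeal_mono_ideal p (hab ▸ (le_sup_right : b ≤ a ⊔ b)) c)
  · intro c _
    rw [testIdeal]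
    apply iSup_le
    intro e
    set q := p ^ (e + 1) with hq
    set N := ⌈c * (p : ℝ) ^ (e + 1)⌉₊ with hN
    have h1 : frobRoot ((a * b) ^ N) q ≤ frobRoot (a ^ N) q * frobRoot (b ^ N) q := by
      apply sInf_le
      show (a * b) ^ N ≤ bracketPow (frobRoot (a ^ N) q * frobRoot (b ^ N) q) q
      calc (a * b) ^ N = a ^ N * b ^ N := mul_pow a b N
        _ ≤ bracketPow (frobRoot (a ^ N) q) q * bracketPow (frobRoot (b ^ N) q) q :=
            Ideal.mul_mono (TestIdealAux.le_bracketPow_frobRoot p hfin hflat _ _)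
              (TestIdealAux.le_bracketPow_frobRoot p hfin hflat _ _)
        _ ≤ bracketPow (frobRoot (a ^ N) q * frobRoot (b ^ N) q) q :=
            TestIdealAux.mul_bracketPow_le _ _ _
    refine h1.trans (Ideal.mul_mono ?_ ?_)
    · exact le_iSup (fun e => frobRoot (a ^ ⌈c * (p : ℝ) ^ (e + 1)⌉₊) (p ^ (e + 1))) e
    · exact le_iSup (fun e => frobRoot (b ^ ⌈c * (p : ℝ) ^ (e + 1)⌉₊) (p ^ (e + 1))) e
end
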